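/- Let S ∈ ℝ^{n×n} be symmetric with nullspace of dimension n_3, and let Z ∈ ℝ^{n×n_3} span N(S). Partition Z^T = [Y_1^T, Y_2^T] with Y_2 ∈ ℝ^{n_3×n_3} nonsingular, and conformally partition S = [[S_{11}, S_{12}],[S_{12}^T, S_{22}]] with S_{11} of size (n-n_3)×(n-n_3). Then S_{11} is nonsingular, and S_{11} has the same numbers of positive and negative eigenvalues as S. -/

import Mathlib

open Matrix

set_option linter.unusedSectionVars false

open Matrix

namespace Stmt6Aux

variable {ι κ : Type*} [Fintype ι] [DecidableEq ι] [Fintype κ] [DecidableEq κ]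

/-- coordinate subspace: vectors vanishing on coordinates satisfying `p` -/
def coordSub (p : ι → Prop) [DecidablePred p] : Submodule ℝ (ι → ℝ) where
  carrier := {z | ∀ i, p i → z i = 0}
  add_mem' := fun ha hb i hi => by simp [ha i hi, hb i hi]
  zero_mem' := fun i _ => rfl
  smul_mem' := fun c a ha i hi => by simp [ha i hi]

lemma mem_coordSub {p : ι → Prop} [DecidablePred p] {z : ι → ℝ} :
    z ∈ coordSub p ↔ ∀ i, p i → z i = 0 := Iff.rfl

lemma finrank_coordSub (p : ι → Prop) [DecidablePred p] :
    Module.finrank ℝ (coordSub p) = Fintype.card {i // ¬ p i} := by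
  let e : coordSub p ≃ₗ[ℝ] ({i // ¬ p i} → ℝ) :=
  { toFun := fun z i => z.1 i.1
    map_add' := fun a b => rfl
    map_smul' := fun c a => rfl
    invFun := fun w => ⟨fun i => if h : p i then 0 else w ⟨i, h⟩, fun i hi => by simp [hi]⟩
    left_inv := fun z => by
      ext i
      by_cases h : p i <;> simp [h, z.2 i]
    right_inv := fun w => by
      ext i
      simp [i.2] }
  rw [e.finrank_eq, Module.finrank_fintype_fun_eq_card]

/-- diagonalization of real quadratic form of a symmetric matrix -/
lemma exists_decomp {A : Matrix ι ι ℝ} (hA : A.IsHermitian) :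
    ∃ e : (ι → ℝ) ≃ₗ[ℝ] (ι → ℝ),
      ∀ x, x ⬝ᵥ A *ᵥ x = ∑ i, hA.eigenvalues i * (e x i) ^ 2 := by
  set U : Matrix ι ι ℝ := (hA.eigenvectorUnitary : Matrix ι ι ℝ) with hU
  have hUst : star (U : Matrix ι ι ℝ) = Uᵀ := by
    rw [Matrix.star_eq_conjTranspose, conjTranspose_eq_transpose_of_trivial]
  have h1 : Uᵀ * U = 1 := by
    have := (Unitary.mem_iff.mp hA.eigenvectorUnitary.2).1
    rwa [hUst] at this
  have h2 : U * Uᵀ = 1 := by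
    have := (Unitary.mem_iff.mp hA.eigenvectorUnitary.2).2
    rwa [hUst] at this
  refine ⟨LinearEquiv.ofLinear (mulVecLin Uᵀ) (mulVecLin U) ?_ ?_, ?_⟩
  · rw [← mulVecLin_mul, h1, mulVecLin_one]
  · rw [← mulVecLin_mul, h2, mulVecLin_one]
  · intro x
    have hs := hA.spectral_theorem
    rw [Unitary.conjStarAlgAut_apply, ← hU, hUst, RCLike.ofReal_real_eq_id] at hs
    have hs' : A = U * diagonal hA.eigenvalues * Uᵀ := hs
    calc x ⬝ᵥ A *ᵥ x
        = x ⬝ᵥ ((U : Matrix ι ι ℝ) *ᵥ (diagonal hA.eigenvalues *ᵥ (Uᵀ *ᵥ x))) := by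
          rw [mulVec_mulVec, mulVec_mulVec, ← hs']
      _ = (Uᵀ *ᵥ x) ⬝ᵥ (diagonal hA.eigenvalues *ᵥ (Uᵀ *ᵥ x)) := by
          rw [dotProduct_mulVec x U (diagonal hA.eigenvalues *ᵥ (Uᵀ *ᵥ x)),
            ← mulVec_transpose]
      _ = ∑ i, hA.eigenvalues i * ((Uᵀ *ᵥ x) i) ^ 2 := by
          simp only [dotProduct, mulVec_diagonal]
          exact Finset.sum_congr rfl fun i _ => by ring
      _ = _ := rfl

lemma exists_pd (A : Matrix ι ι ℝ) (d : ι → ℝ) (e : (ι → ℝ) ≃ₗ[ℝ] (ι → ℝ))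
    (hq : ∀ x, x ⬝ᵥ A *ᵥ x = ∑ i, d i * (e x i) ^ 2) :
    ∃ W : Submodule ℝ (ι → ℝ),
      Module.finrank ℝ W = Fintype.card {i // 0 < d i} ∧
      ∀ x ∈ W, x ≠ 0 → 0 < x ⬝ᵥ A *ᵥ x := by
  classical
  refine ⟨(coordSub (fun i => ¬ 0 < d i)).comap (e : (ι → ℝ) →ₗ[ℝ] (ι → ℝ)), ?_, ?_⟩
  · rw [Submodule.comap_equiv_eq_map_symm, LinearEquiv.finrank_map_eq, finrank_coordSub]
    exact Fintype.card_congr (Equiv.subtypeEquivRight fun i => not_not)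
  · intro x hx hx0
    have hxe : e x ≠ 0 := by
      simpa using (LinearEquiv.map_ne_zero_iff e).mpr hx0
    obtain ⟨i, hi⟩ : ∃ i, e x i ≠ 0 := by
      by_contra h
      push_neg at h
      exact hxe (funext h)
    have hmem : ∀ j, ¬ 0 < d j → e x j = 0 := hx
    have hdi : 0 < d i := by
      by_contra h
      exact hi (hmem i h)
    rw [hq]
    refine Finset.sum_pos' (fun j _ => ?_) ⟨i, Finset.mem_univ i, ?_⟩
    · by_cases h : 0 < d j
      · positivity
      · simp [hmem j h]
    · have : (0:ℝ) < (e x i) ^ 2 := by positivity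
      positivity

lemma pd_le (A : Matrix ι ι ℝ) (d : ι → ℝ) (e : (ι → ℝ) ≃ₗ[ℝ] (ι → ℝ))
    (hq : ∀ x, x ⬝ᵥ A *ᵥ x = ∑ i, d i * (e x i) ^ 2)
    (W : Submodule ℝ (ι → ℝ)) (hW : ∀ x ∈ W, x ≠ 0 → 0 < x ⬝ᵥ A *ᵥ x) :
    Module.finrank ℝ W ≤ Fintype.card {i // 0 < d i} := by
  classical
  set Wn : Submodule ℝ (ι → ℝ) :=
    (coordSub (fun i => 0 < d i)).comap (e : (ι → ℝ) →ₗ[ℝ] (ι → ℝ)) with hWn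
  have hWnrank : Module.finrank ℝ Wn = Fintype.card {i // ¬ 0 < d i} := by
    rw [hWn, Submodule.comap_equiv_eq_map_symm, LinearEquiv.finrank_map_eq, finrank_coordSub]
  have hdisj : Disjoint W Wn := by
    rw [Submodule.disjoint_def]
    intro x hxW hxWn
    by_contra hx0
    have hpos := hW x hxW hx0
    have hnonpos : x ⬝ᵥ A *ᵥ x ≤ 0 := by
      rw [hq]
      refine Finset.sum_nonpos fun j _ => ?_
      by_cases h : 0 < d j
      · have h0 : e x j = 0 := hxWn j h
        rw [h0]
        simp
      · have : d j ≤ 0 := le_of_not_gt h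
        have : d j * (e x j) ^ 2 ≤ 0 := mul_nonpos_of_nonpos_of_nonneg this (by positivity)
        exact this
    linarith
  have hle : Module.finrank ℝ W + Module.finrank ℝ Wn ≤ Fintype.card ι := by
    have := Submodule.finrank_add_finrank_le_of_disjoint hdisj
    rwa [Module.finrank_fintype_fun_eq_card] at this
  have hcompl : Fintype.card {i // ¬ 0 < d i} =
      Fintype.card ι - Fintype.card {i // 0 < d i} := Fintype.card_subtype_compl _
  have hsub : Fintype.card {i // 0 < d i} ≤ Fintype.card ι := Fintype.card_subtype_le _
  omega

/-- transfer lemma -/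
lemma count_le (A : Matrix ι ι ℝ) (B : Matrix κ κ ℝ) (dA : ι → ℝ) (dB : κ → ℝ)
    (eA : (ι → ℝ) ≃ₗ[ℝ] (ι → ℝ)) (eB : (κ → ℝ) ≃ₗ[ℝ] (κ → ℝ))
    (hqA : ∀ x, x ⬝ᵥ A *ᵥ x = ∑ i, dA i * (eA x i) ^ 2)
    (hqB : ∀ x, x ⬝ᵥ B *ᵥ x = ∑ i, dB i * (eB x i) ^ 2)
    (f : (ι → ℝ) →ₗ[ℝ] (κ → ℝ)) (hf : ∀ x, (f x) ⬝ᵥ B *ᵥ (f x) = x ⬝ᵥ A *ᵥ x) :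
    Fintype.card {i // 0 < dA i} ≤ Fintype.card {j // 0 < dB j} := by
  obtain ⟨W, hWrank, hWpd⟩ := exists_pd A dA eA hqA
  set W' : Submodule ℝ (κ → ℝ) := W.map f with hW'
  have hW'pd : ∀ y ∈ W', y ≠ 0 → 0 < y ⬝ᵥ B *ᵥ y := by
    rintro y hy hy0
    obtain ⟨x, hxW, rfl⟩ := hy
    have hx0 : x ≠ 0 := by
      rintro rfl
      exact hy0 (map_zero f)
    rw [hf]
    exact hWpd x hxW hx0
  have hinj : Function.Injective (f.comp W.subtype) := by
    rw [← LinearMap.ker_eq_bot]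
    rw [Submodule.eq_bot_iff]
    rintro ⟨x, hxW⟩ hx
    simp only [LinearMap.mem_ker, LinearMap.comp_apply, Submodule.subtype_apply] at hx
    by_contra hne
    have hx0 : x ≠ 0 := by
      intro h
      exact hne (Subtype.ext h)
    have := hWpd x hxW hx0
    rw [← hf x, hx] at this
    simp at this
  have hrange : LinearMap.range (f.comp W.subtype) = W' := by
    rw [LinearMap.range_comp, Submodule.range_subtype]
  have hW'rank : Module.finrank ℝ W' = Module.finrank ℝ W := by
    rw [← hrange, LinearMap.finrank_range_of_inj hinj]
  calc Fintype.card {i // 0 < dA i} = Module.finrank ℝ W' := by rw [hW'rank, hWrank]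
    _ ≤ _ := pd_le B dB eB hqB W' hW'pd

end Stmt6Aux

section Main
variable {m n3 : ℕ}

theorem stmt6' 
    (S : Matrix (Fin m ⊕ Fin n3) (Fin m ⊕ Fin n3) ℝ) (hS : S.IsHermitian)
    (Z : Matrix (Fin m ⊕ Fin n3) (Fin n3) ℝ)
    (hspan : LinearMap.range Z.mulVecLin = LinearMap.ker S.mulVecLin)
    (hY2 : IsUnit (Z.submatrix (Sum.inr : Fin n3 → Fin m ⊕ Fin n3) id)) :
    IsUnit S.toBlocks₁₁ ∧
    ∀ h11 : S.toBlocks₁₁.IsHermitian,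
      Nat.card {i // 0 < h11.eigenvalues i} = Nat.card {i // 0 < hS.eigenvalues i} ∧
      Nat.card {i // h11.eigenvalues i < 0} = Nat.card {i // hS.eigenvalues i < 0} := by
  classical
  set S11 := S.toBlocks₁₁ with hS11def
  set S12 := S.toBlocks₁₂ with hS12def
  set S21 := S.toBlocks₂₁ with hS21def
  set S22 := S.toBlocks₂₂ with hS22def
  have hST : Sᵀ = S := by
    rw [← conjTranspose_eq_transpose_of_trivial]; exact hS
  have hfb : S = fromBlocks S11 S12 S21 S22 := (fromBlocks_toBlocks S).symm
  have h11T : S11ᵀ = S11 := by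
    ext i j
    exact congrFun (congrFun hST (Sum.inl i)) (Sum.inl j)
  have h22T : S22ᵀ = S22 := by
    ext i j
    exact congrFun (congrFun hST (Sum.inr i)) (Sum.inr j)
  have h21 : S21 = S12ᵀ := by
    ext i j
    exact (congrFun (congrFun hST (Sum.inr i)) (Sum.inl j)).symm
  set Y1 := Z.submatrix (Sum.inl : Fin m → Fin m ⊕ Fin n3) id with hY1def
  set Y2 := Z.submatrix (Sum.inr : Fin n3 → Fin m ⊕ Fin n3) id with hY2def
  have hker : ∀ v, S *ᵥ (Z *ᵥ v) = 0 := by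
    intro v
    have hmem : Z.mulVecLin v ∈ LinearMap.ker S.mulVecLin := by
      rw [← hspan]; exact LinearMap.mem_range_self _ v
    simpa [mulVecLin_apply] using hmem
  have hSZ : S * Z = 0 := by
    ext i c
    have h := hker (Pi.single c 1)
    rw [mulVec_mulVec] at h
    have := congrFun h i
    simpa [mulVec_single] using this
  have hb1 : S11 * Y1 + S12 * Y2 = 0 := by
    ext i c
    have := congrFun (congrFun hSZ (Sum.inl i)) c
    simp only [Matrix.mul_apply, Fintype.sum_sum_type, Matrix.zero_apply] at this
    simpa [Matrix.add_apply, Matrix.mul_apply, hS11def, hS12def, toBlocks₁₁, toBlocks₁₂,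
      hY1def, hY2def, submatrix_apply] using this
  have hb2 : S21 * Y1 + S22 * Y2 = 0 := by
    ext i c
    have := congrFun (congrFun hSZ (Sum.inr i)) c
    simp only [Matrix.mul_apply, Fintype.sum_sum_type, Matrix.zero_apply] at this
    simpa [Matrix.add_apply, Matrix.mul_apply, hS21def, hS22def, toBlocks₂₁, toBlocks₂₂,
      hY1def, hY2def, submatrix_apply] using this
  have hY2det : IsUnit Y2.det := (isUnit_iff_isUnit_det _).mp hY2
  have hY2i : Y2 * Y2⁻¹ = 1 := mul_nonsing_inv _ hY2det
  set Wm := Y1 * Y2⁻¹ with hWmdef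
  have h1 : S11 * Wm + S12 = 0 := by
    rw [hWmdef, ← Matrix.mul_assoc]
    have hs12 : S12 = S12 * Y2 * Y2⁻¹ := by rw [Matrix.mul_assoc, hY2i, Matrix.mul_one]
    rw [hs12, ← Matrix.add_mul, hb1, Matrix.zero_mul]
  have h2 : S21 * Wm + S22 = 0 := by
    rw [hWmdef, ← Matrix.mul_assoc]
    have hs22 : S22 = S22 * Y2 * Y2⁻¹ := by rw [Matrix.mul_assoc, hY2i, Matrix.mul_one]
    rw [hs22, ← Matrix.add_mul, hb2, Matrix.zero_mul]
  set T : Matrix (Fin m ⊕ Fin n3) (Fin m ⊕ Fin n3) ℝ := fromBlocks 1 Wm 0 1 with hTdef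
  set Ti : Matrix (Fin m ⊕ Fin n3) (Fin m ⊕ Fin n3) ℝ := fromBlocks 1 (-Wm) 0 1 with hTidef
  have hTTi : T * Ti = 1 := by
    rw [hTdef, hTidef, fromBlocks_multiply]
    simp [← fromBlocks_one]
  have hTiT : Ti * T = 1 := by
    rw [hTdef, hTidef, fromBlocks_multiply]
    simp [← fromBlocks_one]
  have hWt : Wmᵀ * S11 + S21 = 0 := by
    have h := congrArg Matrix.transpose h1
    rw [transpose_add, transpose_mul, h11T, transpose_zero, ← h21] at h
    exact h
  have hbr : Wmᵀ * S12 + S22 = 0 := by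
    have h := congrArg Matrix.transpose h2
    rw [transpose_add, transpose_mul, h22T, transpose_zero, h21, transpose_transpose] at h
    exact h
  have hG : Tᵀ * S * T = fromBlocks S11 0 0 0 := by
    rw [hfb, hTdef, fromBlocks_transpose, fromBlocks_multiply, fromBlocks_multiply]
    simp only [transpose_one, transpose_zero, Matrix.one_mul, Matrix.mul_one,
      Matrix.zero_mul, Matrix.mul_zero, add_zero, zero_add]
    rw [hWt, hbr, h1]
    simp
  -- invertibility of S11
  have hker0 : ∀ x : Fin m → ℝ, S11 *ᵥ x = 0 → x = 0 := by
    intro x hx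
    have hGv : (Tᵀ * S * T) *ᵥ (Sum.elim x 0) = 0 := by
      rw [hG, fromBlocks_mulVec]
      simp [hx]
    have hSv : S *ᵥ (T *ᵥ (Sum.elim x 0)) = 0 := by
      have h' : Tᵀ *ᵥ (S *ᵥ (T *ᵥ (Sum.elim x 0))) = 0 := by
        rw [mulVec_mulVec, mulVec_mulVec]
        exact hGv
      have hTt : Tiᵀ * Tᵀ = 1 := by rw [← transpose_mul, hTTi, transpose_one]
      have h'' := congrArg (fun w => Tiᵀ *ᵥ w) h'
      simpa [mulVec_mulVec, ← Matrix.mul_assoc, hTt] using h''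
    have hmem : T *ᵥ (Sum.elim x 0) ∈ LinearMap.range Z.mulVecLin := by
      rw [hspan]
      simpa [LinearMap.mem_ker, mulVecLin_apply] using hSv
    obtain ⟨c, hc⟩ := hmem
    have hTv : T *ᵥ (Sum.elim x 0) = Sum.elim x 0 := by
      rw [hTdef, fromBlocks_mulVec]
      simp
    have hZc : Z *ᵥ c = Sum.elim x 0 := by
      rw [← hTv, ← hc]; rfl
    have hY2c : Y2 *ᵥ c = 0 := by
      ext j
      have := congrFun hZc (Sum.inr j)
      simpa [hY2def, mulVec, dotProduct, submatrix_apply] using this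
    have hc0 : c = 0 := by
      have hinj : Function.Injective (Y2.mulVec) := mulVec_injective_iff_isUnit.mpr hY2
      apply hinj
      rw [hY2c, mulVec_zero]
    rw [hc0, mulVec_zero] at hZc
    funext i
    exact (congrFun hZc (Sum.inl i)).symm
  have hS11unit : IsUnit S11 := by
    rw [← mulVec_injective_iff_isUnit]
    intro a b hab
    have : S11 *ᵥ (a - b) = 0 := by rw [mulVec_sub, hab, sub_self]
    exact sub_eq_zero.mp (hker0 _ this)
  refine ⟨hS11unit, ?_⟩
  intro h11
  -- transfer maps
  set incl : (Fin m → ℝ) →ₗ[ℝ] ((Fin m ⊕ Fin n3) → ℝ) :=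
    { toFun := fun x => Sum.elim x 0
      map_add' := fun a b => by ext (i|j) <;> simp
      map_smul' := fun c a => by ext (i|j) <;> simp } with hincl
  set f1 : (Fin m → ℝ) →ₗ[ℝ] ((Fin m ⊕ Fin n3) → ℝ) := (mulVecLin T).comp incl with hf1def
  set f2 : ((Fin m ⊕ Fin n3) → ℝ) →ₗ[ℝ] (Fin m → ℝ) :=
    (LinearMap.funLeft ℝ ℝ Sum.inl).comp (mulVecLin Ti) with hf2def
  have hcore : ∀ v : (Fin m ⊕ Fin n3) → ℝ,
      (T *ᵥ v) ⬝ᵥ S *ᵥ (T *ᵥ v) = (v ∘ Sum.inl) ⬝ᵥ S11 *ᵥ (v ∘ Sum.inl) := by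
    intro v
    have h1' : (T *ᵥ v) ⬝ᵥ S *ᵥ (T *ᵥ v) = v ⬝ᵥ (Tᵀ * S * T) *ᵥ v := by
      calc (T *ᵥ v) ⬝ᵥ S *ᵥ (T *ᵥ v)
          = (v ᵥ* Tᵀ) ⬝ᵥ S *ᵥ (T *ᵥ v) := by rw [vecMul_transpose]
        _ = v ⬝ᵥ Tᵀ *ᵥ (S *ᵥ (T *ᵥ v)) := (dotProduct_mulVec v Tᵀ _).symm
        _ = v ⬝ᵥ (Tᵀ * S * T) *ᵥ v := by
            rw [mulVec_mulVec, mulVec_mulVec]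
    rw [h1', hG]
    have hv : v = Sum.elim (v ∘ Sum.inl) (v ∘ Sum.inr) := (Sum.elim_comp_inl_inr v).symm
    conv_lhs => rw [hv]
    rw [fromBlocks_mulVec, sumElim_dotProduct_sumElim]
    simp
  have hf1 : ∀ x, (f1 x) ⬝ᵥ S *ᵥ (f1 x) = x ⬝ᵥ S11 *ᵥ x := by
    intro x
    have h := hcore (Sum.elim x 0)
    simpa [hf1def, hincl, mulVecLin_apply] using h
  have hf2 : ∀ y, (f2 y) ⬝ᵥ S11 *ᵥ (f2 y) = y ⬝ᵥ S *ᵥ y := by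
    intro y
    have h := hcore (Ti *ᵥ y)
    rw [mulVec_mulVec, hTTi, one_mulVec] at h
    have hfy : f2 y = (Ti *ᵥ y) ∘ Sum.inl := rfl
    rw [hfy]
    exact h.symm
  obtain ⟨e1, he1⟩ := Stmt6Aux.exists_decomp h11
  obtain ⟨eS, heS⟩ := Stmt6Aux.exists_decomp hS
  have hpos : Fintype.card {i // 0 < h11.eigenvalues i} =
      Fintype.card {i // 0 < hS.eigenvalues i} :=
    le_antisymm
      (Stmt6Aux.count_le S11 S _ _ e1 eS he1 heS f1 hf1)
      (Stmt6Aux.count_le S S11 _ _ eS e1 heS he1 f2 hf2)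
  -- negative counts
  have he1n : ∀ x, x ⬝ᵥ (-S11) *ᵥ x = ∑ i, (-(h11.eigenvalues i)) * (e1 x i) ^ 2 := by
    intro x
    rw [neg_mulVec, dotProduct_neg, he1, ← Finset.sum_neg_distrib]
    exact Finset.sum_congr rfl fun i _ => by ring
  have heSn : ∀ x, x ⬝ᵥ (-S) *ᵥ x = ∑ i, (-(hS.eigenvalues i)) * (eS x i) ^ 2 := by
    intro x
    rw [neg_mulVec, dotProduct_neg, heS, ← Finset.sum_neg_distrib]
    exact Finset.sum_congr rfl fun i _ => by ring
  have hf1n : ∀ x, (f1 x) ⬝ᵥ (-S) *ᵥ (f1 x) = x ⬝ᵥ (-S11) *ᵥ x := by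
    intro x
    rw [neg_mulVec, dotProduct_neg, neg_mulVec, dotProduct_neg, hf1]
  have hf2n : ∀ y, (f2 y) ⬝ᵥ (-S11) *ᵥ (f2 y) = y ⬝ᵥ (-S) *ᵥ y := by
    intro y
    rw [neg_mulVec, dotProduct_neg, neg_mulVec, dotProduct_neg, hf2]
  have hneg : Fintype.card {i // 0 < -(h11.eigenvalues i)} =
      Fintype.card {i // 0 < -(hS.eigenvalues i)} :=
    le_antisymm
      (Stmt6Aux.count_le (-S11) (-S) _ _ e1 eS he1n heSn f1 hf1n)
      (Stmt6Aux.count_le (-S) (-S11) _ _ eS e1 heSn he1n f2 hf2n)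
  have hneg' : Fintype.card {i // h11.eigenvalues i < 0} =
      Fintype.card {i // hS.eigenvalues i < 0} := by
    rw [Fintype.card_congr (Equiv.subtypeEquivRight fun i => neg_pos.symm : 
        {i // h11.eigenvalues i < 0} ≃ {i // 0 < -(h11.eigenvalues i)}),
      Fintype.card_congr (Equiv.subtypeEquivRight fun i => neg_pos.symm : 
        {i // hS.eigenvalues i < 0} ≃ {i // 0 < -(hS.eigenvalues i)})]
    exact hneg
  constructor
  · rw [Nat.card_eq_fintype_card, Nat.card_eq_fintype_card]
    convert hpos
  · rw [Nat.card_eq_fintype_card, Nat.card_eq_fintype_card]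
    convert hneg'

end Main

/-- Let S be symmetric on ℝ^{(n-n₃)+n₃} with dim N(S) = n₃ and Z a basis
of N(S) partitioned as Z = [Y₁; Y₂] with Y₂ invertible.  Then the leading principal
block S₁₁ is nonsingular and has the same numbers of positive and negative eigenvalues
as S. -/
theorem stmt6 {m n3 : ℕ}
    (S : Matrix (Fin m ⊕ Fin n3) (Fin m ⊕ Fin n3) ℝ) (hS : S.IsHermitian)
    (hdim : Module.finrank ℝ (LinearMap.ker S.mulVecLin) = n3)
    (Z : Matrix (Fin m ⊕ Fin n3) (Fin n3) ℝ)
    (hind : LinearIndependent ℝ Zᵀ)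
    (hspan : LinearMap.range Z.mulVecLin = LinearMap.ker S.mulVecLin)
    (hY2 : IsUnit (Z.submatrix (Sum.inr : Fin n3 → Fin m ⊕ Fin n3) id)) :
    IsUnit S.toBlocks₁₁ ∧
    ∀ h11 : S.toBlocks₁₁.IsHermitian,
      Nat.card {i // 0 < h11.eigenvalues i} = Nat.card {i // 0 < hS.eigenvalues i} ∧
      Nat.card {i // h11.eigenvalues i < 0} = Nat.card {i // hS.eigenvalues i < 0} := by
  exact stmt6' S hS Z hspan hY2
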